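/- For every k ≥ 1, the hypercube Q_{2^k} has a Hamiltonian cycle C such that the translates of E(C) under some subgroup of Aut(Q_{2^k}) partition E(Q_{2^k}); in particular Q_{2^k} has an edge decomposition into Hamiltonian cycles. -/

import Mathlib

open SimpleGraph

/-- `H` divides `G`: the edge set of `G` can be partitioned into edge sets of
subgraphs of `G`, each isomorphic to `H`. -/
def GraphDivides {α β : Type} (H : SimpleGraph α) (G : SimpleGraph β) : Prop :=
  ∃ (ι : Type) (f : ι → G.Subgraph),
    (∀ i, Nonempty (H ≃g (f i).coe)) ∧
    ∀ e ∈ G.edgeSet, ∃! i, e ∈ (f i).edgeSet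

/-- The `n`-dimensional hypercube graph. -/
def cube (n : ℕ) : SimpleGraph (Fin n → ZMod 2) where
  Adj x y := hammingDist x y = 1
  symm := ⟨fun x y (h : hammingDist x y = 1) => (hammingDist_comm y x).trans h⟩
  loopless := ⟨fun x h => by simp [hammingDist_self] at h⟩


namespace CubeFund
open SimpleGraph Walk

variable {V : Type} {G : SimpleGraph V}

def chainWalk (g : ℕ → V) (h : ∀ i, G.Adj (g i) (g (i+1))) : (ℓ : ℕ) → G.Walk (g 0) (g ℓ)
  | 0 => Walk.nil
  | (ℓ+1) => (chainWalk g h ℓ).concat (h ℓ)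

lemma chainWalk_support (g : ℕ → V) (h : ∀ i, G.Adj (g i) (g (i+1))) (ℓ : ℕ) :
    (chainWalk g h ℓ).support = (List.range (ℓ+1)).map g := by
  induction ℓ with
  | zero => rw [List.range_succ]; simp [chainWalk]
  | succ n ih =>
      rw [chainWalk, Walk.support_concat, ih, List.range_succ (n := n+1)]
      simp

lemma chainWalk_edges (g : ℕ → V) (h : ∀ i, G.Adj (g i) (g (i+1))) (ℓ : ℕ) :
    (chainWalk g h ℓ).edges = (List.range ℓ).map (fun i => s(g i, g (i+1))) := by
  induction ℓ with
  | zero => simp [chainWalk]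
  | succ n ih =>
      rw [chainWalk, Walk.edges_concat, ih, List.range_succ]
      simp

lemma chainWalk_length (g : ℕ → V) (h : ∀ i, G.Adj (g i) (g (i+1))) (ℓ : ℕ) :
    (chainWalk g h ℓ).length = ℓ := by
  induction ℓ with
  | zero => rfl
  | succ n ih => rw [chainWalk, Walk.length_concat, ih]

lemma isHamiltonianCycle_chain [DecidableEq V] (g : ℕ → V) (h : ∀ i, G.Adj (g i) (g (i+1)))
    (M : ℕ) (hM : 3 ≤ M) (hper : g M = g 0)
    (hinj : ∀ i j, i < M → j < M → g i = g j → i = j)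
    (hsurj : ∀ x, ∃ i, i < M ∧ g i = x) :
    ((chainWalk g h M).copy rfl hper).IsHamiltonianCycle := by
  set p := (chainWalk g h M).copy rfl hper with hp
  have hsupp : p.support = (List.range (M+1)).map g := by
    rw [hp, Walk.support_copy, chainWalk_support]
  have hedges : p.edges = (List.range M).map (fun i => s(g i, g (i+1))) := by
    rw [hp, Walk.edges_copy, chainWalk_edges]
  have hlen : p.length = M := by rw [hp, Walk.length_copy, chainWalk_length]
  have hnn : ¬ p.Nil := by
    rw [Walk.nil_iff_length_eq, hlen]; omega
  have htail : p.support.tail = (List.range M).map (fun i => g (i+1)) := by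
    rw [hsupp]
    rw [List.range_succ_eq_map]
    simp [List.map_map, Function.comp]
  -- injectivity on the shifted window [1, M]
  have hinj' : ∀ i j, i < M → j < M → g (i+1) = g (j+1) → i = j := by
    intro i j hi hj hgij
    rcases Nat.lt_or_ge (i+1) M with h1 | h1
    · rcases Nat.lt_or_ge (j+1) M with h2 | h2
      · have := hinj _ _ h1 h2 hgij; omega
      · have hjM : j + 1 = M := by omega
        rw [hjM, hper] at hgij
        have := hinj _ _ h1 (by omega) hgij; omega
    · have hiM : i + 1 = M := by omega
      rcases Nat.lt_or_ge (j+1) M with h2 | h2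
      · rw [hiM, hper] at hgij
        have := hinj 0 (j+1) (by omega) h2 hgij; omega
      · omega
  have htail_nodup : p.support.tail.Nodup := by
    rw [htail]
    refine List.Nodup.map_on ?_ List.nodup_range
    intro i hi j hj hg
    exact hinj' i j (List.mem_range.mp hi) (List.mem_range.mp hj) hg
  have hedges_nodup : p.edges.Nodup := by
    rw [hedges]
    refine List.Nodup.map_on ?_ List.nodup_range
    intro i hi j hj he
    rw [List.mem_range] at hi hj
    rcases Sym2.eq_iff.mp he with ⟨h1, h2⟩ | ⟨h1, h2⟩
    · exact hinj _ _ hi hj h1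
    · -- g i = g (j+1), g (i+1) = g j
      by_cases hjM : j + 1 = M
      · rw [hjM, hper] at h1
        have hi0 : i = 0 := hinj _ _ hi (by omega) h1
        subst hi0
        have : 1 < M := by omega
        have h1M : (1:ℕ) < M := by omega
        have := hinj _ _ h1M hj h2
        omega
      · have := hinj _ _ hi (by omega) h1
        by_cases hiM : i + 1 = M
        · rw [hiM, hper] at h2
          have := hinj _ _ (by omega) hj h2
          omega
        · have := hinj _ _ (by omega) hj h2
          omega
  refine ⟨⟨⟨⟨hedges_nodup⟩, ?_⟩, htail_nodup⟩, ?_⟩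
  · intro hnil
    rw [hnil] at hlen
    simp at hlen; omega
  · -- p.tail.IsHamiltonian
    intro x
    rw [Walk.support_tail_of_not_nil p hnn, htail]
    obtain ⟨i, hi, hgi⟩ := hsurj x
    have hmem : x ∈ (List.range M).map (fun i => g (i+1)) := by
      rcases Nat.eq_zero_or_pos i with h0 | h0
      · subst h0
        refine List.mem_map.mpr ⟨M-1, List.mem_range.mpr (by omega), ?_⟩
        show g (M-1+1) = x
        rw [(by omega : M - 1 + 1 = M), hper]; exact hgi
      · exact List.mem_map.mpr ⟨i-1, List.mem_range.mpr (by omega), by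
          show g (i-1+1) = x
          rw [(by omega : i - 1 + 1 = i)]; exact hgi⟩
    have hnd : (List.map (fun i => g (i + 1)) (List.range M)).Nodup := by
      refine List.Nodup.map_on ?_ List.nodup_range
      intro i hi j hj hg
      exact hinj' i j (List.mem_range.mp hi) (List.mem_range.mp hj) hg
    have hle := List.nodup_iff_count_le_one.mp hnd x
    have hpos := List.count_pos_iff.mpr hmem
    omega


structure NiceData (V : Type) (G : SimpleGraph V) (M : ℕ) where
  f : ZMod M → V
  S : Subgroup (Equiv.Perm V)
  four_le : 4 ≤ M
  auto : ∀ g ∈ S, ∀ x y, G.Adj x y ↔ G.Adj (g x) (g y)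
  adj : ∀ t : ZMod M, G.Adj (f t) (f (t+1))
  inj : Function.Injective f
  surj : Function.Surjective f
  cover : ∀ e ∈ G.edgeSet, ∃! p : S × ZMod M,
      e = Sym2.map (⇑(p.1 : Equiv.Perm V)) s(f p.2, f (p.2+1))

instance (n : ℕ) (x y : Fin n → ZMod 2) : Decidable ((cube n).Adj x y) :=
  inferInstanceAs (Decidable (hammingDist x y = 1))

def grayF : ZMod 4 → (Fin 2 → ZMod 2) := fun t => ![![0,0],![0,1],![1,1],![1,0]] (t : Fin 4)

lemma gray_adj : ∀ t : ZMod 4, (cube 2).Adj (grayF t) (grayF (t+1)) := by decide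

lemma gray_inj : Function.Injective grayF := by decide

lemma gray_surj : Function.Surjective grayF := by decide

lemma gray_cover' : ∀ x y, (cube 2).Adj x y → ∃ t : ZMod 4,
    s(x,y) = s(grayF t, grayF (t+1)) ∧ ∀ u : ZMod 4, s(x,y) = s(grayF u, grayF (u+1)) → u = t := by
  decide

lemma gray_cover : ∀ e ∈ (cube 2).edgeSet, ∃! t : ZMod 4, e = s(grayF t, grayF (t+1)) := by
  intro e
  induction e with
  | _ x y =>
      intro he
      obtain ⟨t, h1, h2⟩ := gray_cover' x y he
      exact ⟨t, h1, h2⟩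

def baseData : NiceData (Fin 2 → ZMod 2) (cube 2) 4 where
  f := grayF
  S := ⊥
  four_le := le_refl 4
  auto := by
    intro g hg x y
    rw [Subgroup.mem_bot] at hg
    subst hg
    rfl
  adj := gray_adj
  inj := gray_inj
  surj := gray_surj
  cover := by
    intro e he
    obtain ⟨t, ht, huniq⟩ := gray_cover e he
    refine ⟨⟨⟨1, Subgroup.one_mem _⟩, t⟩, ?_, ?_⟩
    · simpa using ht
    · rintro ⟨⟨g, hg⟩, u⟩ h
      rw [Subgroup.mem_bot] at hg
      subst hg
      simp only at h
      have := huniq u (by simpa using h)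
      subst this
      rfl


variable {V : Type} {G : SimpleGraph V} {M : ℕ}

/-! ### the doubled group -/

def diag (g : Equiv.Perm V) : Equiv.Perm (V × V) := Equiv.prodCongr g g

def swp : Equiv.Perm (V × V) := Equiv.prodComm V V

@[simp] lemma diag_apply (g : Equiv.Perm V) (x : V × V) : diag g x = (g x.1, g x.2) := rfl
@[simp] lemma swp_apply (x : V × V) : swp (x) = (x.2, x.1) := rfl

lemma diag_one : diag (1 : Equiv.Perm V) = 1 := by ext x <;> rfl

lemma diag_mul (g h : Equiv.Perm V) : diag (g * h) = diag g * diag h := by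
  ext x <;> rfl

lemma diag_inv (g : Equiv.Perm V) : (diag g)⁻¹ = diag g⁻¹ := by
  rw [inv_eq_iff_mul_eq_one, ← diag_mul, mul_inv_cancel, diag_one]

lemma swp_mul_swp : (swp : Equiv.Perm (V × V)) * swp = 1 := by ext x <;> rfl

lemma swp_mul_diag (g : Equiv.Perm V) : swp * diag g = diag g * swp := by ext x <;> rfl

def dblS (S : Subgroup (Equiv.Perm V)) : Subgroup (Equiv.Perm (V × V)) where
  carrier := {h | ∃ g ∈ S, h = diag g ∨ h = diag g * swp}
  one_mem' := ⟨1, S.one_mem, Or.inl diag_one.symm⟩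
  mul_mem' := by
    rintro a b ⟨g, hg, rfl | rfl⟩ ⟨g', hg', rfl | rfl⟩
    · exact ⟨g * g', S.mul_mem hg hg', Or.inl (diag_mul g g').symm⟩
    · exact ⟨g * g', S.mul_mem hg hg', Or.inr (by rw [diag_mul, mul_assoc])⟩
    · refine ⟨g * g', S.mul_mem hg hg', Or.inr ?_⟩
      rw [diag_mul, mul_assoc, swp_mul_diag, ← mul_assoc]
    · refine ⟨g * g', S.mul_mem hg hg', Or.inl ?_⟩
      rw [diag_mul]
      calc diag g * swp * (diag g' * swp) = diag g * (swp * diag g') * swp := by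
            rw [mul_assoc, mul_assoc, mul_assoc]
        _ = diag g * diag g' * (swp * swp) := by rw [swp_mul_diag, mul_assoc, mul_assoc, mul_assoc]
        _ = diag g * diag g' := by rw [swp_mul_swp, mul_one]
  inv_mem' := by
    rintro a ⟨g, hg, rfl | rfl⟩
    · exact ⟨g⁻¹, S.inv_mem hg, Or.inl (diag_inv g)⟩
    · refine ⟨g⁻¹, S.inv_mem hg, Or.inr ?_⟩
      rw [mul_inv_rev, diag_inv]
      have hsi : (swp : Equiv.Perm (V × V))⁻¹ = swp := by
        rw [inv_eq_iff_mul_eq_one, swp_mul_swp]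
      rw [hsi, swp_mul_diag]

/-! ### Sym2 helpers -/

lemma sym2_hor_eq {x₁ x₂ y u₁ u₂ w : V} 
    (h : s(((x₁,y) : V × V),(x₂,y)) = s((u₁,w),(u₂,w))) : y = w ∧ s(x₁,x₂) = s(u₁,u₂) := by
  rcases Sym2.eq_iff.mp h with ⟨h1, h2⟩ | ⟨h1, h2⟩
  · obtain ⟨ha, hb⟩ := Prod.mk.injEq .. ▸ h1
    obtain ⟨hc, hd⟩ := Prod.mk.injEq .. ▸ h2
    exact ⟨hb, by rw [ha, hc]⟩
  · obtain ⟨ha, hb⟩ := Prod.mk.injEq .. ▸ h1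
    obtain ⟨hc, hd⟩ := Prod.mk.injEq .. ▸ h2
    exact ⟨hb, by rw [ha, hc]; exact Sym2.eq_swap⟩

lemma sym2_ver_eq {x y₁ y₂ u w₁ w₂ : V}
    (h : s(((x,y₁) : V × V),(x,y₂)) = s((u,w₁),(u,w₂))) : x = u ∧ s(y₁,y₂) = s(w₁,w₂) := by
  rcases Sym2.eq_iff.mp h with ⟨h1, h2⟩ | ⟨h1, h2⟩
  · obtain ⟨ha, hb⟩ := Prod.mk.injEq .. ▸ h1
    obtain ⟨hc, hd⟩ := Prod.mk.injEq .. ▸ h2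
    exact ⟨ha, by rw [hb, hd]⟩
  · obtain ⟨ha, hb⟩ := Prod.mk.injEq .. ▸ h1
    obtain ⟨hc, hd⟩ := Prod.mk.injEq .. ▸ h2
    exact ⟨ha, by rw [hb, hd]; exact Sym2.eq_swap⟩

lemma sym2_hor_ne_ver {x₁ x₂ y X a b : V} (hx : x₁ ≠ x₂) (hab : a ≠ b) :
    s(((x₁,y) : V × V),(x₂,y)) ≠ s((X,a),(X,b)) := by
  intro h
  rcases Sym2.eq_iff.mp h with ⟨h1, h2⟩ | ⟨h1, h2⟩
  · obtain ⟨ha, hb⟩ := Prod.mk.injEq .. ▸ h1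
    obtain ⟨hc, hd⟩ := Prod.mk.injEq .. ▸ h2
    exact hx (ha.trans hc.symm)
  · obtain ⟨ha, hb⟩ := Prod.mk.injEq .. ▸ h1
    obtain ⟨hc, hd⟩ := Prod.mk.injEq .. ▸ h2
    exact hab (hd.symm.trans hb)

lemma sym2_hor_mk {x₁ x₂ y u₁ u₂ w : V} (h : s(x₁,x₂) = s(u₁,u₂)) (hyw : y = w) :
    s(((x₁,y) : V × V),(x₂,y)) = s((u₁,w),(u₂,w)) := by
  subst hyw
  rcases Sym2.eq_iff.mp h with ⟨h1, h2⟩ | ⟨h1, h2⟩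
  · rw [h1, h2]
  · rw [h1, h2]; exact Sym2.eq_swap

lemma sym2_ver_mk {x y₁ y₂ u w₁ w₂ : V} (h : s(y₁,y₂) = s(w₁,w₂)) (hxu : x = u) :
    s(((x,y₁) : V × V),(x,y₂)) = s((u,w₁),(u,w₂)) := by
  subst hxu
  rcases Sym2.eq_iff.mp h with ⟨h1, h2⟩ | ⟨h1, h2⟩
  · rw [h1, h2]
  · rw [h1, h2]; exact Sym2.eq_swap

/-! ### the snake cycle -/

def Fd (d : NiceData V G M) : ℕ → V × V := fun a =>
  (d.f (1 - ((a / M : ℕ) : ZMod M) + ((a % M : ℕ) : ZMod M)), d.f ((a / M : ℕ) : ZMod M))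

lemma Fd_val (d : NiceData V G M) (s j : ℕ) (hj : j < M) :
    Fd d (j + s * M) = (d.f (1 - (s : ZMod M) + (j : ZMod M)), d.f (s : ZMod M)) := by
  have h1 : (j + s * M) / M = s := by
    rw [Nat.add_mul_div_right _ _ (by omega : 0 < M), Nat.div_eq_of_lt hj, Nat.zero_add]
  have h2 : (j + s * M) % M = j := by
    rw [Nat.add_mul_mod_self_right, Nat.mod_eq_of_lt hj]
  rw [Fd, h1, h2]

lemma Fd_mod (d : NiceData V G M) (a : ℕ) : Fd d (a % (M * M)) = Fd d a := by
  have h1 : a % (M * M) % M = a % M := Nat.mod_mod_of_dvd a ⟨M, rfl⟩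
  have h2 : a % (M * M) / M = a / M % M := Nat.mod_mul_right_div_self a M M
  rw [Fd, Fd, h1, h2, ZMod.natCast_mod]

lemma Fd_adj (d : NiceData V G M) (a : ℕ) : (G □ G).Adj (Fd d a) (Fd d (a + 1)) := by
  have hM : 0 < M := by have := d.four_le; omega
  have hdecomp : a = a % M + (a / M) * M := by
    rw [Nat.mod_add_div' a M]
  set j := a % M with hj
  set s := a / M with hs
  have hjM : j < M := Nat.mod_lt a hM
  by_cases hend : j = M - 1
  · -- wrap to next row
    have ha : a = (M-1) + s * M := by omega
    have ha' : a + 1 = 0 + (s+1) * M := by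
      rw [Nat.zero_add, Nat.add_mul, Nat.one_mul]
      omega
    rw [ha', ha, Fd_val d s (M-1) (by omega), Fd_val d (s+1) 0 (by omega)]
    have hm1 : ((M - 1 : ℕ) : ZMod M) = -1 := by
      have hM0 : ((M : ℕ) : ZMod M) = 0 := ZMod.natCast_self M
      push_cast [Nat.cast_sub (by omega : 1 ≤ M)]
      rw [hM0]; ring
    rw [boxProd_adj]
    refine Or.inr ⟨?_, ?_⟩
    · push_cast
      convert d.adj (s : ZMod M) using 2
    · simp only [hm1]
      push_cast
      ring_nf
  · have ha : a = j + s * M := by omega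
    have ha' : a + 1 = (j+1) + s * M := by omega
    rw [ha', ha, Fd_val d s j hjM, Fd_val d s (j+1) (by omega)]
    rw [boxProd_adj]
    refine Or.inl ⟨?_, rfl⟩
    push_cast
    have := d.adj (1 - (s : ZMod M) + (j : ZMod M))
    convert this using 2
    ring

lemma val_cast' {n : ℕ} [NeZero n] (p : ZMod n) : ((p.val : ℕ) : ZMod n) = p := by
  rw [ZMod.natCast_val, ZMod.cast_id]

lemma neg_one_val {n : ℕ} (h : 2 ≤ n) : ((n - 1 : ℕ) : ZMod n) = -1 := by
  have hM0 : ((n : ℕ) : ZMod n) = 0 := ZMod.natCast_self n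
  push_cast [Nat.cast_sub (by omega : 1 ≤ n)]
  rw [hM0]; ring

def f2 (d : NiceData V G M) : ZMod (M*M) → V × V := fun p => Fd d p.val

lemma f2_cast (d : NiceData V G M) (a : ℕ) : f2 d ((a : ℕ) : ZMod (M*M)) = Fd d a := by
  haveI : NeZero (M*M) := ⟨Nat.mul_ne_zero (by have := d.four_le; omega) (by have := d.four_le; omega)⟩
  rw [f2, ZMod.val_natCast, Fd_mod]

lemma f2_edge (d : NiceData V G M) (a : ℕ) :
    s(f2 d (a : ZMod (M*M)), f2 d ((a : ZMod (M*M)) + 1)) = s(Fd d a, Fd d (a+1)) := by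
  have h1 : ((a : ZMod (M*M)) + 1) = ((a + 1 : ℕ) : ZMod (M*M)) := by push_cast; ring
  rw [h1, f2_cast, f2_cast]

def Phor (σ τ : ZMod M) : ZMod (M*M) := (((τ + σ - 1).val + σ.val * M : ℕ) : ZMod (M*M))

def Pver (σ : ZMod M) : ZMod (M*M) := (((M - 1) + σ.val * M : ℕ) : ZMod (M*M))

lemma edge_hor (d : NiceData V G M) (σ τ : ZMod M) (hne : τ + σ ≠ 0) :
    s(f2 d (Phor σ τ), f2 d (Phor σ τ + 1)) =
      s((d.f τ, d.f σ), (d.f (τ+1), d.f σ)) := by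
  haveI : NeZero M := ⟨by have := d.four_le; omega⟩
  set j := (τ + σ - 1).val with hj
  have hjM : j < M := ZMod.val_lt _
  have hjcast : ((j : ℕ) : ZMod M) = τ + σ - 1 := val_cast' _
  have hjne : j ≠ M - 1 := by
    intro hcon
    apply hne
    have : ((j : ℕ) : ZMod M) = -1 := by rw [hcon]; exact neg_one_val (by have := d.four_le; omega)
    rw [hjcast] at this
    have := congrArg (· + 1) this
    simpa [sub_add_cancel] using this
  rw [Phor, f2_edge, Fd_val d σ.val j hjM]
  have ha1 : j + σ.val * M + 1 = (j+1) + σ.val * M := by omega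
  rw [ha1, Fd_val d σ.val (j+1) (by omega)]
  rw [val_cast']
  have e1 : 1 - σ + ((j : ℕ) : ZMod M) = τ := by rw [hjcast]; ring
  have e2 : 1 - σ + ((j + 1 : ℕ) : ZMod M) = τ + 1 := by push_cast; rw [hjcast]; ring
  rw [e1, e2]

lemma edge_ver (d : NiceData V G M) (σ : ZMod M) :
    s(f2 d (Pver σ), f2 d (Pver σ + 1)) =
      s((d.f (-σ), d.f σ), (d.f (-σ), d.f (σ+1))) := by
  haveI : NeZero M := ⟨by have := d.four_le; omega⟩
  rw [Pver, f2_edge, Fd_val d σ.val (M-1) (by have := d.four_le; omega)]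
  have ha1 : (M - 1) + σ.val * M + 1 = 0 + (σ.val + 1) * M := by
    have := d.four_le; rw [Nat.zero_add, Nat.add_mul, Nat.one_mul]; omega
  rw [ha1, Fd_val d (σ.val+1) 0 (by have := d.four_le; omega)]
  rw [val_cast', neg_one_val (by have := d.four_le; omega)]
  have e1 : 1 - σ + (-1) = -σ := by ring
  have e2 : ((σ.val + 1 : ℕ) : ZMod M) = σ + 1 := by push_cast; rw [val_cast']
  rw [e1, e2]
  have e3 : (1 : ZMod M) - (σ + 1) + ((0 : ℕ) : ZMod M) = -σ := by push_cast; ring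
  rw [e3]

lemma pos_decomp (d : NiceData V G M) (Q : ZMod (M*M)) :
    (∃ σ τ : ZMod M, τ + σ ≠ 0 ∧ Q = Phor σ τ) ∨ (∃ σ : ZMod M, Q = Pver σ) := by
  haveI : NeZero M := ⟨by have := d.four_le; omega⟩
  haveI : NeZero (M*M) := ⟨Nat.mul_ne_zero (by have := d.four_le; omega) (by have := d.four_le; omega)⟩
  set a := Q.val with ha
  have haM : a < M * M := ZMod.val_lt _
  set j := a % M with hj
  set s := a / M with hs
  have hjM : j < M := Nat.mod_lt a (by have := d.four_le; omega)
  have hsM : s < M := Nat.div_lt_iff_lt_mul (by have := d.four_le; omega) |>.mpr haM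
  have hdecomp : a = j + s * M := by
    rw [hj, hs, Nat.mod_add_div' a M]
  have hQ : Q = ((j + s * M : ℕ) : ZMod (M*M)) := by
    rw [← hdecomp, ha, val_cast']
  have hsval : ((s : ℕ) : ZMod M).val = s := ZMod.val_cast_of_lt hsM
  by_cases hend : j = M - 1
  · refine Or.inr ⟨(s : ZMod M), ?_⟩
    rw [Pver, hsval, hQ, hend]
  · refine Or.inl ⟨(s : ZMod M), 1 - (s : ZMod M) + (j : ZMod M), ?_, ?_⟩
    · intro hcon
      have : ((j + 1 : ℕ) : ZMod M) = 0 := by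
        push_cast
        calc (j : ZMod M) + 1 = 1 - (s : ZMod M) + (j : ZMod M) + (s : ZMod M) := by ring
          _ = 0 := hcon
      have hdvd := (ZMod.natCast_eq_zero_iff _ _).mp this
      have := Nat.le_of_dvd (by omega) hdvd
      omega
    · rw [Phor]
      have e1 : 1 - (s : ZMod M) + (j : ZMod M) + (s : ZMod M) - 1 = (j : ZMod M) := by ring
      rw [e1, ZMod.val_cast_of_lt hjM, hsval, hQ]

def dblData (d : NiceData V G M) : NiceData (V × V) (G □ G) (M * M) where
  f := f2 d
  S := dblS d.S
  four_le := le_trans d.four_le (Nat.le_mul_of_pos_left M (by have := d.four_le; omega))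
  auto := by
    rintro h ⟨g, hgS, rfl | rfl⟩ x y
    · have hg := d.auto g hgS
      rw [boxProd_adj, boxProd_adj]
      simp only [diag_apply]
      constructor
      · rintro (⟨h1, h2⟩ | ⟨h1, h2⟩)
        · exact Or.inl ⟨(hg _ _).mp h1, by rw [h2]⟩
        · exact Or.inr ⟨(hg _ _).mp h1, by rw [h2]⟩
      · rintro (⟨h1, h2⟩ | ⟨h1, h2⟩)
        · exact Or.inl ⟨(hg _ _).mpr h1, g.injective h2⟩
        · exact Or.inr ⟨(hg _ _).mpr h1, g.injective h2⟩
    · have hg := d.auto g hgS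
      rw [boxProd_adj, boxProd_adj]
      simp only [Equiv.Perm.mul_apply, swp_apply, diag_apply]
      constructor
      · rintro (⟨h1, h2⟩ | ⟨h1, h2⟩)
        · exact Or.inr ⟨(hg _ _).mp h1, by rw [h2]⟩
        · exact Or.inl ⟨(hg _ _).mp h1, by rw [h2]⟩
      · rintro (⟨h1, h2⟩ | ⟨h1, h2⟩)
        · exact Or.inr ⟨(hg _ _).mpr h1, g.injective h2⟩
        · exact Or.inl ⟨(hg _ _).mpr h1, g.injective h2⟩
  adj := by
    haveI : NeZero (M*M) := ⟨Nat.mul_ne_zero (by have := d.four_le; omega) (by have := d.four_le; omega)⟩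
    intro p
    have h2 : f2 d (p + 1) = Fd d (p.val + 1) := by
      have : p + 1 = ((p.val + 1 : ℕ) : ZMod (M*M)) := by
        push_cast
        rw [val_cast' p]
      rw [this, f2_cast]
    have h1 : f2 d p = Fd d p.val := rfl
    rw [h1, h2]
    exact Fd_adj d p.val
  inj := by
    haveI : NeZero M := ⟨by have := d.four_le; omega⟩
    haveI : NeZero (M*M) := ⟨Nat.mul_ne_zero (by have := d.four_le; omega) (by have := d.four_le; omega)⟩
    intro p q hpq
    obtain ⟨h1, h2⟩ := Prod.ext_iff.mp hpq
    simp only [f2, Fd] at h1 h2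
    have hdivp : p.val / M < M := Nat.div_lt_iff_lt_mul (by have := d.four_le; omega) |>.mpr (ZMod.val_lt _)
    have hdivq : q.val / M < M := Nat.div_lt_iff_lt_mul (by have := d.four_le; omega) |>.mpr (ZMod.val_lt _)
    have hs := d.inj h2
    have hsn : p.val / M = q.val / M := by
      have := congrArg ZMod.val hs
      rwa [ZMod.val_cast_of_lt hdivp, ZMod.val_cast_of_lt hdivq] at this
    have hj : ((p.val % M : ℕ) : ZMod M) = ((q.val % M : ℕ) : ZMod M) := by
      have h1' := d.inj h1
      rw [hs] at h1'
      exact add_left_cancel h1'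
    have hjn : p.val % M = q.val % M := by
      have := congrArg ZMod.val hj
      rwa [ZMod.val_cast_of_lt (Nat.mod_lt _ (by have := d.four_le; omega)),
           ZMod.val_cast_of_lt (Nat.mod_lt _ (by have := d.four_le; omega))] at this
    have : p.val = q.val := by
      have hp := Nat.mod_add_div' p.val M
      have hq := Nat.mod_add_div' q.val M
      rw [hsn, hjn] at hp
      omega
    exact ZMod.val_injective _ this
  surj := by
    haveI : NeZero M := ⟨by have := d.four_le; omega⟩
    rintro ⟨x, y⟩
    obtain ⟨m, rfl⟩ := d.surj x
    obtain ⟨σ, rfl⟩ := d.surj y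
    refine ⟨(((m + σ - 1).val + σ.val * M : ℕ) : ZMod (M*M)), ?_⟩
    rw [f2_cast, Fd_val d σ.val _ (ZMod.val_lt _), val_cast', val_cast']
    have e1 : 1 - σ + (m + σ - 1) = m := by ring
    rw [e1]
  cover := by
    haveI : NeZero M := ⟨by have := d.four_le; omega⟩
    haveI : NeZero (M*M) := ⟨Nat.mul_ne_zero (by have := d.four_le; omega) (by have := d.four_le; omega)⟩
    intro e he
    induction e using Sym2.ind with
    | _ z₁ z₂ =>
    obtain ⟨x₁, y₁⟩ := z₁
    obtain ⟨x₂, y₂⟩ := z₂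
    rw [SimpleGraph.mem_edgeSet, boxProd_adj] at he
    rcases he with ⟨hadj, heq⟩ | ⟨hadj2, heq2⟩
    · -- horizontal edge
      simp only at hadj heq
      subst heq
      have hxe : s(x₁, x₂) ∈ G.edgeSet := by rwa [SimpleGraph.mem_edgeSet]
      obtain ⟨⟨⟨g, hgS⟩, t⟩, hcov, huniq⟩ := d.cover s(x₁, x₂) hxe
      simp only at hcov huniq
      obtain ⟨s', hs'⟩ := d.surj (g.symm y₁)
      have hy : g (d.f s') = y₁ := by rw [hs']; exact g.apply_symm_apply y₁
      have hx12 : x₁ ≠ x₂ := G.ne_of_adj hadj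
      by_cases hts : t + s' = 0
      · refine ⟨⟨⟨diag g * swp, ⟨g, hgS, Or.inr rfl⟩⟩, Pver t⟩, ?_, ?_⟩
        · dsimp only
          rw [edge_ver d t, Sym2.map_pair_eq]
          simp only [Equiv.Perm.mul_apply, swp_apply, diag_apply]
          refine sym2_hor_mk ?_ ?_
          · rw [hcov, Sym2.map_pair_eq]
          · have hs2 : s' = -t := by linear_combination hts
            rw [← hs2]; exact hy.symm
        · rintro ⟨⟨h, hmem⟩, Q⟩ hQ
          obtain ⟨g', hg'S, rfl | rfl⟩ := hmem
          · rcases pos_decomp d Q with ⟨σ, τ, hτσ, rfl⟩ | ⟨σ, rfl⟩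
            · simp only at hQ
              rw [edge_hor d σ τ hτσ, Sym2.map_pair_eq] at hQ
              simp only [diag_apply] at hQ
              obtain ⟨hyw, hxx⟩ := sym2_hor_eq hQ
              have hpair := huniq ⟨⟨g', hg'S⟩, τ⟩ (by rw [Sym2.map_pair_eq]; exact hxx)
              have hgg : g' = g := congrArg (fun p => ((p.1 : ↥d.S) : Equiv.Perm V)) hpair
              have hτt : τ = t := congrArg Prod.snd hpair
              have h5 : g (d.f σ) = y₁ := by rw [hgg] at hyw; exact hyw.symm
              have hσs : σ = s' := d.inj (g.injective (h5.trans hy.symm))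
              exact absurd (by rw [hτt, hσs]; exact hts) hτσ
            · simp only at hQ
              rw [edge_ver d σ, Sym2.map_pair_eq] at hQ
              simp only [diag_apply] at hQ
              exact absurd hQ (sym2_hor_ne_ver hx12 (fun hcon => (d.adj σ).ne (g'.injective hcon)))
          · rcases pos_decomp d Q with ⟨σ, τ, hτσ, rfl⟩ | ⟨σ, rfl⟩
            · simp only at hQ
              rw [edge_hor d σ τ hτσ, Sym2.map_pair_eq] at hQ
              simp only [Equiv.Perm.mul_apply, swp_apply, diag_apply] at hQ
              exact absurd hQ (sym2_hor_ne_ver hx12 (fun hcon => (d.adj τ).ne (g'.injective hcon)))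
            · simp only at hQ
              rw [edge_ver d σ, Sym2.map_pair_eq] at hQ
              simp only [Equiv.Perm.mul_apply, swp_apply, diag_apply] at hQ
              obtain ⟨hyw, hxx⟩ := sym2_hor_eq hQ
              have hpair := huniq ⟨⟨g', hg'S⟩, σ⟩ (by rw [Sym2.map_pair_eq]; exact hxx)
              have hgg : g' = g := congrArg (fun p => ((p.1 : ↥d.S) : Equiv.Perm V)) hpair
              have hσt : σ = t := congrArg Prod.snd hpair
              subst hgg
              subst hσt
              rfl
      · refine ⟨⟨⟨diag g, ⟨g, hgS, Or.inl rfl⟩⟩, Phor s' t⟩, ?_, ?_⟩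
        · dsimp only
          rw [edge_hor d s' t hts, Sym2.map_pair_eq]
          simp only [diag_apply]
          exact sym2_hor_mk (by rw [hcov, Sym2.map_pair_eq]) hy.symm
        · rintro ⟨⟨h, hmem⟩, Q⟩ hQ
          obtain ⟨g', hg'S, rfl | rfl⟩ := hmem
          · rcases pos_decomp d Q with ⟨σ, τ, hτσ, rfl⟩ | ⟨σ, rfl⟩
            · simp only at hQ
              rw [edge_hor d σ τ hτσ, Sym2.map_pair_eq] at hQ
              simp only [diag_apply] at hQ
              obtain ⟨hyw, hxx⟩ := sym2_hor_eq hQ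
              have hpair := huniq ⟨⟨g', hg'S⟩, τ⟩ (by rw [Sym2.map_pair_eq]; exact hxx)
              have hgg : g' = g := congrArg (fun p => ((p.1 : ↥d.S) : Equiv.Perm V)) hpair
              have hτt : τ = t := congrArg Prod.snd hpair
              have h5 : g (d.f σ) = y₁ := by rw [hgg] at hyw; exact hyw.symm
              have hσs : σ = s' := d.inj (g.injective (h5.trans hy.symm))
              subst hgg
              subst hτt
              subst hσs
              rfl
            · simp only at hQ
              rw [edge_ver d σ, Sym2.map_pair_eq] at hQ
              simp only [diag_apply] at hQ
              exact absurd hQ (sym2_hor_ne_ver hx12 (fun hcon => (d.adj σ).ne (g'.injective hcon)))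
          · rcases pos_decomp d Q with ⟨σ, τ, hτσ, rfl⟩ | ⟨σ, rfl⟩
            · simp only at hQ
              rw [edge_hor d σ τ hτσ, Sym2.map_pair_eq] at hQ
              simp only [Equiv.Perm.mul_apply, swp_apply, diag_apply] at hQ
              exact absurd hQ (sym2_hor_ne_ver hx12 (fun hcon => (d.adj τ).ne (g'.injective hcon)))
            · simp only at hQ
              rw [edge_ver d σ, Sym2.map_pair_eq] at hQ
              simp only [Equiv.Perm.mul_apply, swp_apply, diag_apply] at hQ
              obtain ⟨hyw, hxx⟩ := sym2_hor_eq hQ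
              have hpair := huniq ⟨⟨g', hg'S⟩, σ⟩ (by rw [Sym2.map_pair_eq]; exact hxx)
              have hgg : g' = g := congrArg (fun p => ((p.1 : ↥d.S) : Equiv.Perm V)) hpair
              have hσt : σ = t := congrArg Prod.snd hpair
              have h5 : g (d.f (-σ)) = y₁ := by rw [hgg] at hyw; exact hyw.symm
              have hneg : -σ = s' := d.inj (g.injective (h5.trans hy.symm))
              exact absurd (by rw [← hneg, hσt]; ring) hts
    · -- vertical edge
      rename_i foo
      have hadj : G.Adj y₁ y₂ := hadj2
      have heq : x₁ = x₂ := heq2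
      clear hadj2 heq2
      subst heq
      have hxe : s(y₁, y₂) ∈ G.edgeSet := by rwa [SimpleGraph.mem_edgeSet]
      obtain ⟨⟨⟨g, hgS⟩, t⟩, hcov, huniq⟩ := d.cover s(y₁, y₂) hxe
      simp only at hcov huniq
      obtain ⟨m', hm'⟩ := d.surj (g.symm x₁)
      have hy : g (d.f m') = x₁ := by rw [hm']; exact g.apply_symm_apply x₁
      have hy12 : y₁ ≠ y₂ := G.ne_of_adj hadj
      by_cases hts : t + m' = 0
      · refine ⟨⟨⟨diag g, ⟨g, hgS, Or.inl rfl⟩⟩, Pver t⟩, ?_, ?_⟩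
        · dsimp only
          rw [edge_ver d t, Sym2.map_pair_eq]
          simp only [diag_apply]
          refine sym2_ver_mk ?_ ?_
          · rw [hcov, Sym2.map_pair_eq]
          · have hs2 : m' = -t := by linear_combination hts
            rw [← hs2]; exact hy.symm
        · rintro ⟨⟨h, hmem⟩, Q⟩ hQ
          obtain ⟨g', hg'S, rfl | rfl⟩ := hmem
          · rcases pos_decomp d Q with ⟨σ, τ, hτσ, rfl⟩ | ⟨σ, rfl⟩
            · simp only at hQ
              rw [edge_hor d σ τ hτσ, Sym2.map_pair_eq] at hQ
              simp only [diag_apply] at hQ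
              exact absurd hQ.symm (sym2_hor_ne_ver (fun hcon => (d.adj τ).ne (g'.injective hcon)) hy12)
            · simp only at hQ
              rw [edge_ver d σ, Sym2.map_pair_eq] at hQ
              simp only [diag_apply] at hQ
              obtain ⟨hxw, hyy⟩ := sym2_ver_eq hQ
              have hpair := huniq ⟨⟨g', hg'S⟩, σ⟩ (by rw [Sym2.map_pair_eq]; exact hyy)
              have hgg : g' = g := congrArg (fun p => ((p.1 : ↥d.S) : Equiv.Perm V)) hpair
              have hσt : σ = t := congrArg Prod.snd hpair
              subst hgg
              subst hσt
              rfl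
          · rcases pos_decomp d Q with ⟨σ, τ, hτσ, rfl⟩ | ⟨σ, rfl⟩
            · simp only at hQ
              rw [edge_hor d σ τ hτσ, Sym2.map_pair_eq] at hQ
              simp only [Equiv.Perm.mul_apply, swp_apply, diag_apply] at hQ
              obtain ⟨hxw, hyy⟩ := sym2_ver_eq hQ
              have hpair := huniq ⟨⟨g', hg'S⟩, τ⟩ (by rw [Sym2.map_pair_eq]; exact hyy)
              have hgg : g' = g := congrArg (fun p => ((p.1 : ↥d.S) : Equiv.Perm V)) hpair
              have hτt : τ = t := congrArg Prod.snd hpair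
              have h5 : g (d.f σ) = x₁ := by rw [hgg] at hxw; exact hxw.symm
              have hσm : σ = m' := d.inj (g.injective (h5.trans hy.symm))
              exact absurd (by rw [hτt, hσm]; exact hts) hτσ
            · simp only at hQ
              rw [edge_ver d σ, Sym2.map_pair_eq] at hQ
              simp only [Equiv.Perm.mul_apply, swp_apply, diag_apply] at hQ
              exact absurd hQ.symm (sym2_hor_ne_ver (fun hcon => (d.adj σ).ne (g'.injective hcon)) hy12)
      · refine ⟨⟨⟨diag g * swp, ⟨g, hgS, Or.inr rfl⟩⟩, Phor m' t⟩, ?_, ?_⟩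
        · dsimp only
          rw [edge_hor d m' t hts, Sym2.map_pair_eq]
          simp only [Equiv.Perm.mul_apply, swp_apply, diag_apply]
          exact sym2_ver_mk (by rw [hcov, Sym2.map_pair_eq]) hy.symm
        · rintro ⟨⟨h, hmem⟩, Q⟩ hQ
          obtain ⟨g', hg'S, rfl | rfl⟩ := hmem
          · rcases pos_decomp d Q with ⟨σ, τ, hτσ, rfl⟩ | ⟨σ, rfl⟩
            · simp only at hQ
              rw [edge_hor d σ τ hτσ, Sym2.map_pair_eq] at hQ
              simp only [diag_apply] at hQ
              exact absurd hQ.symm (sym2_hor_ne_ver (fun hcon => (d.adj τ).ne (g'.injective hcon)) hy12)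
            · simp only at hQ
              rw [edge_ver d σ, Sym2.map_pair_eq] at hQ
              simp only [diag_apply] at hQ
              obtain ⟨hxw, hyy⟩ := sym2_ver_eq hQ
              have hpair := huniq ⟨⟨g', hg'S⟩, σ⟩ (by rw [Sym2.map_pair_eq]; exact hyy)
              have hgg : g' = g := congrArg (fun p => ((p.1 : ↥d.S) : Equiv.Perm V)) hpair
              have hσt : σ = t := congrArg Prod.snd hpair
              have h5 : g (d.f (-σ)) = x₁ := by rw [hgg] at hxw; exact hxw.symm
              have hneg : -σ = m' := d.inj (g.injective (h5.trans hy.symm))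
              exact absurd (by rw [← hneg, hσt]; ring) hts
          · rcases pos_decomp d Q with ⟨σ, τ, hτσ, rfl⟩ | ⟨σ, rfl⟩
            · simp only at hQ
              rw [edge_hor d σ τ hτσ, Sym2.map_pair_eq] at hQ
              simp only [Equiv.Perm.mul_apply, swp_apply, diag_apply] at hQ
              obtain ⟨hxw, hyy⟩ := sym2_ver_eq hQ
              have hpair := huniq ⟨⟨g', hg'S⟩, τ⟩ (by rw [Sym2.map_pair_eq]; exact hyy)
              have hgg : g' = g := congrArg (fun p => ((p.1 : ↥d.S) : Equiv.Perm V)) hpair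
              have hτt : τ = t := congrArg Prod.snd hpair
              have h5 : g (d.f σ) = x₁ := by rw [hgg] at hxw; exact hxw.symm
              have hσm : σ = m' := d.inj (g.injective (h5.trans hy.symm))
              subst hgg
              subst hτt
              subst hσm
              rfl
            · simp only at hQ
              rw [edge_ver d σ, Sym2.map_pair_eq] at hQ
              simp only [Equiv.Perm.mul_apply, swp_apply, diag_apply] at hQ
              exact absurd hQ.symm (sym2_hor_ne_ver (fun hcon => (d.adj σ).ne (g'.injective hcon)) hy12)

/-! ### transport along a graph equivalence -/

def conjHom {W : Type} (E : V ≃ W) : Equiv.Perm V →* Equiv.Perm W where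
  toFun g := (E.symm.trans g).trans E
  map_one' := by ext w; simp
  map_mul' g h := by ext w; simp [Equiv.Perm.mul_apply]

@[simp] lemma conjHom_apply {W : Type} (E : V ≃ W) (g : Equiv.Perm V) (w : W) :
    conjHom E g w = E (g (E.symm w)) := rfl

lemma sym2_map_cancel {W : Type} (E : V ≃ W) (q : Sym2 W) :
    Sym2.map ⇑E (Sym2.map ⇑E.symm q) = q := by
  rw [Sym2.map_map]
  have : (⇑E ∘ ⇑E.symm) = id := by funext x; simp
  rw [this, Sym2.map_id]
  rfl

lemma sym2_map_cancel' {W : Type} (E : V ≃ W) (q : Sym2 V) :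
    Sym2.map ⇑E.symm (Sym2.map ⇑E q) = q := by
  rw [Sym2.map_map]
  have : (⇑E.symm ∘ ⇑E) = id := by funext x; simp
  rw [this, Sym2.map_id]
  rfl

def transport {W : Type} {H : SimpleGraph W} (E : V ≃ W)
    (hE : ∀ x y, G.Adj x y ↔ H.Adj (E x) (E y)) (d : NiceData V G M) :
    NiceData W H M where
  f := fun t => E (d.f t)
  S := d.S.map (conjHom E)
  four_le := d.four_le
  auto := by
    intro h hh x y
    rw [Subgroup.mem_map] at hh
    obtain ⟨g, hgS, rfl⟩ := hh
    have h1 : H.Adj x y ↔ G.Adj (E.symm x) (E.symm y) := by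
      rw [hE (E.symm x) (E.symm y)]
      simp
    rw [h1, d.auto g hgS (E.symm x) (E.symm y)]
    simp only [conjHom_apply]
    rw [hE (g (E.symm x)) (g (E.symm y))]
  adj := fun t => (hE _ _).mp (d.adj t)
  inj := fun a b hab => d.inj (E.injective hab)
  surj := by
    intro w
    obtain ⟨t, ht⟩ := d.surj (E.symm w)
    exact ⟨t, by show E (d.f t) = w; rw [ht]; simp⟩
  cover := by
    intro e he
    have he' : Sym2.map ⇑E.symm e ∈ G.edgeSet := by
      induction e using Sym2.ind with
      | _ a b =>
        rw [SimpleGraph.mem_edgeSet] at he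
        rw [Sym2.map_pair_eq, SimpleGraph.mem_edgeSet]
        rw [hE (E.symm a) (E.symm b)]
        simpa using he
    obtain ⟨⟨⟨g, hgS⟩, t⟩, hcov, huniq⟩ := d.cover _ he'
    simp only at hcov huniq
    refine ⟨⟨⟨conjHom E g, Subgroup.mem_map.mpr ⟨g, hgS, rfl⟩⟩, t⟩, ?_, ?_⟩
    · show e = Sym2.map (⇑(conjHom E g)) s(E (d.f t), E (d.f (t+1)))
      have hcov2 : e = s(E (g (d.f t)), E (g (d.f (t+1)))) := by
        have h3 := congrArg (Sym2.map ⇑E) hcov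
        rw [sym2_map_cancel] at h3
        rw [h3, Sym2.map_map]
        rw [Sym2.map_pair_eq]
        rfl
      rw [Sym2.map_pair_eq]
      simp only [conjHom_apply, Equiv.symm_apply_apply]
      exact hcov2
    · rintro ⟨⟨h, hmem⟩, Q⟩ hQ
      simp only at hQ
      rw [Subgroup.mem_map] at hmem
      obtain ⟨g', hg'S, rfl⟩ := hmem
      have hQ' : Sym2.map ⇑E.symm e = Sym2.map ⇑g' s(d.f Q, d.f (Q+1)) := by
        rw [hQ]
        rw [Sym2.map_pair_eq, Sym2.map_pair_eq, Sym2.map_pair_eq]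
        simp [conjHom_apply, Equiv.symm_apply_apply]
      have hpair := huniq ⟨⟨g', hg'S⟩, Q⟩ hQ'
      have hgg : g' = g := congrArg (fun p => ((p.1 : ↥d.S) : Equiv.Perm V)) hpair
      have hQt : Q = t := congrArg Prod.snd hpair
      subst hgg
      subst hQt
      rfl


def splitE (n : ℕ) : (Fin (n+n) → ZMod 2) ≃ (Fin n → ZMod 2) × (Fin n → ZMod 2) :=
  (Equiv.arrowCongr finSumFinEquiv.symm (Equiv.refl (ZMod 2))).trans
    (Equiv.sumArrowEquivProdArrow _ _ _)

lemma splitE_fst (n : ℕ) (x : Fin (n+n) → ZMod 2) :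
    (splitE n x).1 = fun i => x (finSumFinEquiv (Sum.inl i)) := rfl

lemma splitE_snd (n : ℕ) (x : Fin (n+n) → ZMod 2) :
    (splitE n x).2 = fun i => x (finSumFinEquiv (Sum.inr i)) := rfl

lemma ham_split (n : ℕ) (x y : Fin (n+n) → ZMod 2) :
    hammingDist x y = hammingDist (splitE n x).1 (splitE n y).1
      + hammingDist (splitE n x).2 (splitE n y).2 := by
  rw [splitE_fst, splitE_snd, splitE_fst, splitE_snd]
  simp only [hammingDist]
  rw [← Fintype.card_subtype, ← Fintype.card_subtype, ← Fintype.card_subtype]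
  rw [← Fintype.card_sum]
  apply Fintype.card_congr
  refine (Equiv.subtypeEquiv finSumFinEquiv.symm ?_).trans
    (Equiv.subtypeSum (p := fun u => x (finSumFinEquiv u) ≠ y (finSumFinEquiv u)))
  intro a
  simp

lemma cube_adj_split (n : ℕ) (x y : Fin (n+n) → ZMod 2) :
    (cube (n+n)).Adj x y ↔ (cube n □ cube n).Adj (splitE n x) (splitE n y) := by
  rw [boxProd_adj]
  show hammingDist x y = 1 ↔ _
  rw [ham_split n x y]
  constructor
  · intro h
    have hcase : (hammingDist (splitE n x).1 (splitE n y).1 = 1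
          ∧ hammingDist (splitE n x).2 (splitE n y).2 = 0)
        ∨ (hammingDist (splitE n x).1 (splitE n y).1 = 0
          ∧ hammingDist (splitE n x).2 (splitE n y).2 = 1) := by omega
    rcases hcase with ⟨h1, h2⟩ | ⟨h1, h2⟩
    · exact Or.inl ⟨h1, hammingDist_eq_zero.mp h2⟩
    · exact Or.inr ⟨h2, hammingDist_eq_zero.mp h1⟩
  · rintro (⟨h1, h2⟩ | ⟨h1, h2⟩)
    · have : hammingDist (splitE n x).2 (splitE n y).2 = 0 := hammingDist_eq_zero.mpr h2
      have h1' : hammingDist (splitE n x).1 (splitE n y).1 = 1 := h1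
      omega
    · have : hammingDist (splitE n x).1 (splitE n y).1 = 0 := hammingDist_eq_zero.mpr h2
      have h1' : hammingDist (splitE n x).2 (splitE n y).2 = 1 := h1
      omega


lemma nice_cube (k : ℕ) (hk : 1 ≤ k) :
    Nonempty (NiceData (Fin (2^k) → ZMod 2) (cube (2^k)) (2^(2^k))) := by
  induction k with
  | zero => omega
  | succ k ih =>
    by_cases hk0 : k = 0
    · subst hk0
      have h2 : (2:ℕ)^(2^(0+1)) = 4 := by norm_num
      have h1 : (2:ℕ)^(0+1) = 2 := by norm_num
      rw [h2, h1]
      exact ⟨baseData⟩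
    · obtain ⟨d⟩ := ih (by omega)
      have h2 : 2^(k+1) = 2^k + 2^k := by rw [pow_succ]; ring
      have hM : 2^(2^(k+1)) = 2^(2^k) * 2^(2^k) := by rw [h2, pow_add]
      rw [hM, h2]
      refine ⟨transport (splitE (2^k)).symm ?_ (dblData d)⟩
      intro x y
      rw [cube_adj_split (2^k) ((splitE (2^k)).symm x) ((splitE (2^k)).symm y)]
      rw [Equiv.apply_symm_apply, Equiv.apply_symm_apply]

end CubeFund

theorem cube_pow_two_fundamental_hamiltonian_cycle (k : ℕ) (hk : 1 ≤ k) :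
    ∃ (v : Fin (2 ^ k) → ZMod 2) (C : (cube (2 ^ k)).Walk v v),
      C.IsHamiltonianCycle ∧
      ∃ S : Subgroup (Equiv.Perm (Fin (2 ^ k) → ZMod 2)),
        (∀ g ∈ S, ∀ x y, (cube (2 ^ k)).Adj x y ↔ (cube (2 ^ k)).Adj (g x) (g y)) ∧
        ∀ e ∈ (cube (2 ^ k)).edgeSet,
          ∃! g : Equiv.Perm (Fin (2 ^ k) → ZMod 2),
            g ∈ S ∧ e ∈ Sym2.map g '' {e' | e' ∈ C.edges} := by
  classical
  obtain ⟨d⟩ := CubeFund.nice_cube k hk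
  set M := 2^(2^k) with hMdef
  haveI : NeZero M := ⟨by positivity⟩
  set V := (Fin (2^k) → ZMod 2)
  set G := cube (2^k)
  set g : ℕ → V := fun i => d.f (i : ZMod M) with hg
  have hadj : ∀ i, G.Adj (g i) (g (i+1)) := by
    intro i
    have : ((i+1 : ℕ) : ZMod M) = (i : ZMod M) + 1 := by push_cast; ring
    rw [hg]
    simp only
    rw [this]
    exact d.adj _
  have hper : g M = g 0 := by
    rw [hg]
    simp only
    norm_cast
    rw [ZMod.natCast_self]
  have hinj : ∀ i j, i < M → j < M → g i = g j → i = j := by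
    intro i j hi hj hgij
    have := d.inj hgij
    have h2 := congrArg ZMod.val this
    rwa [ZMod.val_cast_of_lt hi, ZMod.val_cast_of_lt hj] at h2
  have hsurj : ∀ x, ∃ i, i < M ∧ g i = x := by
    intro x
    obtain ⟨t, ht⟩ := d.surj x
    refine ⟨t.val, ZMod.val_lt t, ?_⟩
    rw [hg]
    simp only
    rw [CubeFund.val_cast' t]
    exact ht
  have hM3 : 3 ≤ M := by have := d.four_le; omega
  refine ⟨g 0, (CubeFund.chainWalk g hadj M).copy rfl hper,
    CubeFund.isHamiltonianCycle_chain g hadj M hM3 hper hinj hsurj, d.S, d.auto, ?_⟩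
  intro e he
  obtain ⟨⟨⟨γ, hγS⟩, t⟩, hcov, huniq⟩ := d.cover e he
  simp only at hcov huniq
  have hedges : ((CubeFund.chainWalk g hadj M).copy rfl hper).edges
      = (List.range M).map (fun i => s(g i, g (i+1))) := by
    rw [SimpleGraph.Walk.edges_copy, CubeFund.chainWalk_edges]
  have hbridge : ∀ i : ℕ, s(g i, g (i+1)) = s(d.f (i : ZMod M), d.f ((i : ZMod M) + 1)) := by
    intro i
    have : ((i+1 : ℕ) : ZMod M) = (i : ZMod M) + 1 := by push_cast; ring
    rw [hg]
    simp only
    rw [this]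
  refine ⟨γ, ⟨hγS, ?_⟩, ?_⟩
  · -- e in the image
    refine (Set.mem_image _ _ _).mpr ⟨s(d.f t, d.f (t+1)), ?_, hcov.symm⟩
    show s(d.f t, d.f (t+1)) ∈ ((CubeFund.chainWalk g hadj M).copy rfl hper).edges
    rw [hedges]
    refine List.mem_map.mpr ⟨t.val, List.mem_range.mpr (ZMod.val_lt t), ?_⟩
    rw [hbridge t.val, CubeFund.val_cast' t]
  · rintro γ' ⟨hγ'S, hmem⟩
    obtain ⟨e', he', hmap⟩ := (Set.mem_image _ _ _).mp hmem
    have he'' : e' ∈ (List.range M).map (fun i => s(g i, g (i+1))) := by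
      rw [← hedges]; exact he'
    obtain ⟨i, hiR, hie⟩ := List.mem_map.mp he''
    have hpred : e = Sym2.map ⇑γ' s(d.f ((i : ZMod M)), d.f ((i : ZMod M) + 1)) := by
      rw [← hbridge i, hie, hmap]
    have hpair := huniq ⟨⟨γ', hγ'S⟩, (i : ZMod M)⟩ hpred
    exact congrArg (fun p : ↥d.S × ZMod M => ((p.1 : ↥d.S) : Equiv.Perm (Fin (2^k) → ZMod 2))) hpair
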